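/- For any two probability measures P and Q on a measurable space, the Jensen–Shannon divergence is bounded above by the total variation distance: JSD(P, Q) ≤ TV(P, Q). -/

import Mathlib

open MeasureTheory
open scoped ENNReal

open Classical in
/-- Kullback–Leibler divergence, valued in the extended reals:
`KL(P‖Q) = ∫ log (dP/dQ) dP` if `P ≪ Q` and the log-likelihood ratio is
`P`-integrable, and `∞` otherwise. -/
noncomputable def klDiv {Ω : Type*} [MeasurableSpace Ω] (P Q : Measure Ω) : EReal :=
  if P ≪ Q ∧ Integrable (llr P Q) P then ((∫ x, llr P Q x ∂P : ℝ) : EReal) else ⊤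

/-- Jensen–Shannon divergence:
`JSD(P,Q) = (1/2) KL(P‖M) + (1/2) KL(Q‖M)` with `M = (1/2)(P + Q)`. -/
noncomputable def jsDiv {Ω : Type*} [MeasurableSpace Ω] (P Q : Measure Ω) : EReal :=
  (1 / 2 : EReal) * klDiv P ((2 : ℝ≥0∞)⁻¹ • (P + Q))
    + (1 / 2 : EReal) * klDiv Q ((2 : ℝ≥0∞)⁻¹ • (P + Q))

/-- Total variation distance between two measures:
`TV(P,Q) = sup_{A measurable} |P(A) - Q(A)|`. -/
noncomputable def tvDist {Ω : Type*} [MeasurableSpace Ω] (P Q : Measure Ω) : ℝ :=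
  ⨆ A : {s : Set Ω // MeasurableSet s}, |(P A.1).toReal - (Q A.1).toReal|

/-- Pointwise inequality: if `a + b = 2` with `a, b ≥ 0`, then
`a log a + b log b ≤ 2 |a - 1|`. -/
lemma jsd_aux_ineq {a b : ℝ} (ha : 0 ≤ a) (hb : 0 ≤ b) (hab : a + b = 2) :
    a * Real.log a + b * Real.log b ≤ 2 * |a - 1| := by
  have h1 : a * Real.log a ≤ a * (a - 1) := by
    rcases eq_or_lt_of_le ha with h | h
    · simp [← h]
    · exact mul_le_mul_of_nonneg_left (Real.log_le_sub_one_of_pos h) ha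
  have h2 : b * Real.log b ≤ b * (b - 1) := by
    rcases eq_or_lt_of_le hb with h | h
    · simp [← h]
    · exact mul_le_mul_of_nonneg_left (Real.log_le_sub_one_of_pos h) hb
  have habs : |a - 1| ≤ 1 := by rw [abs_le]; constructor <;> linarith
  have h4 : (a - 1) ^ 2 ≤ |a - 1| := by
    nlinarith [sq_abs (a - 1), abs_nonneg (a - 1)]
  nlinarith

/-- `|t log t| ≤ 2` for `t ∈ [0, 2]`. -/
lemma jsd_aux_bound {t : ℝ} (ht : 0 ≤ t) (ht2 : t ≤ 2) : |t * Real.log t| ≤ 2 := by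
  rcases le_or_gt t 1 with h | h
  · rcases eq_or_lt_of_le ht with h0 | h0
    · simp [← h0]
    · have hlog : Real.log t ≤ 0 := Real.log_nonpos ht h
      have hkey : -(t * Real.log t) ≤ 1 := by
        have hinv : Real.log t⁻¹ ≤ t⁻¹ - 1 := Real.log_le_sub_one_of_pos (by positivity)
        have hneg : -Real.log t = Real.log t⁻¹ := (Real.log_inv t).symm
        have h5 : t * Real.log t⁻¹ ≤ t * (t⁻¹ - 1) := mul_le_mul_of_nonneg_left hinv ht
        have h6 : t * (t⁻¹ - 1) = 1 - t := by field_simp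
        nlinarith
      rw [abs_of_nonpos (mul_nonpos_of_nonneg_of_nonpos ht hlog)]
      linarith
  · have hlog : 0 ≤ Real.log t := Real.log_nonneg h.le
    have hle : Real.log t ≤ t - 1 := Real.log_le_sub_one_of_pos (by linarith)
    rw [abs_of_nonneg (by positivity)]
    nlinarith

theorem jsDiv_le_tvDist {Ω : Type*} [MeasurableSpace Ω]
    (P Q : Measure Ω) [IsProbabilityMeasure P] [IsProbabilityMeasure Q] :
    jsDiv P Q ≤ ((tvDist P Q : ℝ) : EReal) := by
  rw [jsDiv]
  set M : Measure Ω := (2 : ℝ≥0∞)⁻¹ • (P + Q) with hM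
  -- M is a probability measure
  have hMuniv : M Set.univ = 1 := by
    simp [hM, Measure.smul_apply, measure_univ, smul_eq_mul]
    rw [← two_mul, ENNReal.mul_inv_cancel two_ne_zero ENNReal.ofNat_ne_top]
  haveI hMPr : IsProbabilityMeasure M := ⟨hMuniv⟩
  -- absolute continuity
  have hPM : P ≪ M := by
    refine Measure.AbsolutelyContinuous.mk fun s hs h0 => ?_
    simp only [hM, Measure.smul_apply, smul_eq_mul, Measure.add_apply] at h0
    rcases mul_eq_zero.mp h0 with h | h
    · exact absurd h (by simp)
    · exact (add_eq_zero.mp h).1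
  have hQM : Q ≪ M := by
    refine Measure.AbsolutelyContinuous.mk fun s hs h0 => ?_
    simp only [hM, Measure.smul_apply, smul_eq_mul, Measure.add_apply] at h0
    rcases mul_eq_zero.mp h0 with h | h
    · exact absurd h (by simp)
    · exact (add_eq_zero.mp h).2
  have hPQ2 : P + Q = (2 : ℝ≥0∞) • M := by
    rw [hM, smul_smul, ENNReal.mul_inv_cancel two_ne_zero ENNReal.ofNat_ne_top, one_smul]
  set p := P.rnDeriv M with hp
  set q := Q.rnDeriv M with hq
  have hp_meas : Measurable p := Measure.measurable_rnDeriv P M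
  have hq_meas : Measurable q := Measure.measurable_rnDeriv Q M
  -- p + q = 2 a.e.
  have h_sum : ∀ᵐ x ∂M, p x + q x = 2 := by
    have h1 := Measure.rnDeriv_add P Q M
    have h2 := Measure.rnDeriv_smul_left_of_ne_top M M (ENNReal.ofNat_ne_top (n := 2))
    have h3 := M.rnDeriv_self
    rw [← hPQ2] at h2
    filter_upwards [h1, h2, h3] with x hx1 hx2 hx3
    have hx4 := hx1.symm.trans hx2
    simp only [Pi.add_apply, Pi.smul_apply, smul_eq_mul, hx3] at hx4 ⊢
    rw [hx4, mul_one]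
  have h_toReal_sum : ∀ᵐ x ∂M, (p x).toReal + (q x).toReal = 2 := by
    filter_upwards [h_sum, Measure.rnDeriv_lt_top P M, Measure.rnDeriv_lt_top Q M]
      with x hx hxp hxq
    have := congrArg ENNReal.toReal hx
    rwa [ENNReal.toReal_add hxp.ne hxq.ne, show ((2:ℝ≥0∞)).toReal = 2 by simp] at this
  have h_p_le2 : ∀ᵐ x ∂M, (p x).toReal ≤ 2 := by
    filter_upwards [h_toReal_sum] with x hx
    have := ENNReal.toReal_nonneg (a := q x)
    linarith
  have h_q_le2 : ∀ᵐ x ∂M, (q x).toReal ≤ 2 := by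
    filter_upwards [h_toReal_sum] with x hx
    have := ENNReal.toReal_nonneg (a := p x)
    linarith
  -- KL terms are finite and equal to integrals over M
  have h_int_P_M : Integrable (fun x => (p x).toReal * Real.log (p x).toReal) M := by
    refine (integrable_const (2:ℝ)).mono' ?_ ?_
    · exact ((hp_meas.ennreal_toReal).mul (hp_meas.ennreal_toReal.log)).aestronglyMeasurable
    · filter_upwards [h_p_le2] with x hx
      rw [Real.norm_eq_abs]
      exact jsd_aux_bound ENNReal.toReal_nonneg hx
  have h_int_Q_M : Integrable (fun x => (q x).toReal * Real.log (q x).toReal) M := by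
    refine (integrable_const (2:ℝ)).mono' ?_ ?_
    · exact ((hq_meas.ennreal_toReal).mul (hq_meas.ennreal_toReal.log)).aestronglyMeasurable
    · filter_upwards [h_q_le2] with x hx
      rw [Real.norm_eq_abs]
      exact jsd_aux_bound ENNReal.toReal_nonneg hx
  have h_int_llr_P : Integrable (llr P M) P := by
    rw [← integrable_rnDeriv_smul_iff hPM]
    simpa [llr_def, smul_eq_mul] using h_int_P_M
  have h_int_llr_Q : Integrable (llr Q M) Q := by
    rw [← integrable_rnDeriv_smul_iff hQM]
    simpa [llr_def, smul_eq_mul] using h_int_Q_M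
  have hKLP : klDiv P M = ((∫ x, (p x).toReal * Real.log (p x).toReal ∂M : ℝ) : EReal) := by
    rw [klDiv, if_pos ⟨hPM, h_int_llr_P⟩]
    congr 1
    rw [← integral_rnDeriv_smul hPM]
    simp [llr_def, smul_eq_mul]
    rfl
  have hKLQ : klDiv Q M = ((∫ x, (q x).toReal * Real.log (q x).toReal ∂M : ℝ) : EReal) := by
    rw [klDiv, if_pos ⟨hQM, h_int_llr_Q⟩]
    congr 1
    rw [← integral_rnDeriv_smul hQM]
    simp [llr_def, smul_eq_mul]
    rfl
  set IP : ℝ := ∫ x, (p x).toReal * Real.log (p x).toReal ∂M with hIP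
  set IQ : ℝ := ∫ x, (q x).toReal * Real.log (q x).toReal ∂M with hIQ
  -- the TV-side bound
  set A : Set Ω := {x | 1 ≤ p x} with hA_def
  have hA : MeasurableSet A := measurableSet_le measurable_const hp_meas
  set f : Ω → ℝ := fun x => (p x).toReal - 1 with hf_def
  have h_int_p : Integrable (fun x => (p x).toReal) M := Measure.integrable_toReal_rnDeriv
  have h_int_f : Integrable f M := h_int_p.sub (integrable_const 1)
  have h0 : ∫ x, f x ∂M = 0 := by
    rw [hf_def]
    rw [integral_sub h_int_p (integrable_const 1), Measure.integral_toReal_rnDeriv hPM]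
    simp
  have hsplit : ∫ x in A, f x ∂M + ∫ x in Aᶜ, f x ∂M = 0 := by
    rw [integral_add_compl hA h_int_f, h0]
  have h_abs_A : ∫ x in A, |f x| ∂M = ∫ x in A, f x ∂M := by
    refine setIntegral_congr_ae hA ?_
    filter_upwards [Measure.rnDeriv_lt_top P M] with x hxlt hxA
    have h1 : (1:ℝ) ≤ (p x).toReal := by
      have := (ENNReal.toReal_le_toReal ENNReal.one_ne_top hxlt.ne).mpr hxA
      simpa using this
    rw [abs_of_nonneg (by simp [hf_def]; linarith)]
  have h_abs_Ac : ∫ x in Aᶜ, |f x| ∂M = - ∫ x in Aᶜ, f x ∂M := by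
    rw [← integral_neg]
    refine setIntegral_congr_ae hA.compl ?_
    filter_upwards [Measure.rnDeriv_lt_top P M] with x hxlt hxA
    have h1 : (p x).toReal < 1 := by
      have hlt : p x < 1 := by simpa [hA_def] using hxA
      have := (ENNReal.toReal_lt_toReal hxlt.ne ENNReal.one_ne_top).mpr hlt
      simpa using this
    rw [abs_of_nonpos (by simp [hf_def]; linarith)]
  have h_abs_total : ∫ x, |f x| ∂M = 2 * ∫ x in A, f x ∂M := by
    rw [← integral_add_compl hA h_int_f.abs, h_abs_A, h_abs_Ac]
    linarith
  have hPA : ∫ x in A, (p x).toReal ∂M = (P A).toReal :=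
    Measure.setIntegral_toReal_rnDeriv hPM A
  have hQA : ∫ x in A, (q x).toReal ∂M = (Q A).toReal :=
    Measure.setIntegral_toReal_rnDeriv hQM A
  have hMA : ∫ x in A, (1:ℝ) ∂M = (M A).toReal := by
    simp [setIntegral_const]
    rfl
  have hfa : ∫ x in A, f x ∂M = (P A).toReal - (M A).toReal := by
    rw [hf_def]
    rw [integral_sub (h_int_p.restrict) ((integrable_const 1).restrict), hPA, hMA]
  have hQA' : (Q A).toReal = 2 * (M A).toReal - (P A).toReal := by
    rw [← hQA, ← hPA]
    have h2c : ∫ x in A, (2:ℝ) ∂M = 2 * (M A).toReal := by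
      simp [mul_comm]
      rfl
    rw [← h2c, ← integral_sub ((integrable_const (2:ℝ)).restrict) h_int_p.restrict]
    refine setIntegral_congr_ae hA ?_
    filter_upwards [h_toReal_sum] with x hx _
    linarith
  have key : ∫ x, |f x| ∂M = (P A).toReal - (Q A).toReal := by
    rw [h_abs_total, hfa, hQA']; ring
  have h_bdd : BddAbove (Set.range fun A : {s : Set Ω // MeasurableSet s} =>
      |(P A.1).toReal - (Q A.1).toReal|) := by
    refine ⟨2, ?_⟩
    rintro x ⟨s, rfl⟩
    have h1 : (P s.1).toReal ≤ 1 := by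
      have := ENNReal.toReal_mono (measure_ne_top P Set.univ) (measure_mono (Set.subset_univ s.1))
      simpa [measure_univ] using this
    have h2 : (Q s.1).toReal ≤ 1 := by
      have := ENNReal.toReal_mono (measure_ne_top Q Set.univ) (measure_mono (Set.subset_univ s.1))
      simpa [measure_univ] using this
    have h3 : (0:ℝ) ≤ (P s.1).toReal := ENNReal.toReal_nonneg
    have h4 : (0:ℝ) ≤ (Q s.1).toReal := ENNReal.toReal_nonneg
    rw [abs_le]; constructor <;> linarith
  have h_tv : ∫ x, |f x| ∂M ≤ tvDist P Q := by
    calc ∫ x, |f x| ∂M = (P A).toReal - (Q A).toReal := key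
      _ ≤ |(P A).toReal - (Q A).toReal| := le_abs_self _
      _ ≤ tvDist P Q := le_ciSup h_bdd ⟨A, hA⟩
  -- the middle inequality
  have h_int_absf : Integrable (fun x => |f x|) M := h_int_f.abs
  have h_mid : IP + IQ ≤ 2 * ∫ x, |f x| ∂M := by
    rw [hIP, hIQ, ← integral_add h_int_P_M h_int_Q_M]
    have h2int : ∫ x, 2 * |f x| ∂M = 2 * ∫ x, |f x| ∂M := by
      rw [← smul_eq_mul, ← integral_smul]
      simp [smul_eq_mul]
    rw [← h2int]
    refine integral_mono_ae (h_int_P_M.add h_int_Q_M) (h_int_absf.const_mul 2) ?_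
    filter_upwards [h_toReal_sum] with x hx
    simpa [hf_def] using
      jsd_aux_ineq (ENNReal.toReal_nonneg (a := p x)) (ENNReal.toReal_nonneg (a := q x)) hx
  have h_real : 1/2 * IP + 1/2 * IQ ≤ tvDist P Q := by linarith
  -- conclude in EReal
  have h_half : (1/2 : EReal) = ((1/2 : ℝ) : EReal) := by
    rw [one_div, one_div, show ((2:EReal)) = ((2:ℝ):EReal) by norm_cast, ← EReal.coe_inv]
  rw [hKLP, hKLQ, h_half, ← EReal.coe_mul, ← EReal.coe_mul, ← EReal.coe_add]
  exact_mod_cast h_real
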